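/- In a strict 2×2×2 game with a pure Nash equilibrium s*, the at most four profiles that differ from s* in at least two coordinates cannot contain a best-response cycle; consequently the best-response dynamics graph of such a game has no non-trivial sink. -/

import Mathlib

section Defs

variable {n : ℕ} {S : Fin n → Type*}

/-- A better-response transition: `s'` differs from `s` only in player `i`'s
strategy, which strictly improves `i`'s utility. -/
def IsBetter (u : ∀ i : Fin n, (∀ j, S j) → ℝ) (s s' : ∀ j, S j) : Prop :=
  ∃ i, s' = Function.update s i (s' i) ∧ s' i ≠ s i ∧ u i s < u i s'

/-- A best-response transition: additionally the new strategy maximizes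
`i`'s utility against the others' strategies. -/
def IsBest (u : ∀ i : Fin n, (∀ j, S j) → ℝ) (s s' : ∀ j, S j) : Prop :=
  ∃ i, s' = Function.update s i (s' i) ∧ s' i ≠ s i ∧ u i s < u i s' ∧
    ∀ t : S i, u i (Function.update s i t) ≤ u i s'

/-- Pure Nash equilibrium. -/
def IsNash (u : ∀ i : Fin n, (∀ j, S j) → ℝ) (s : ∀ j, S j) : Prop :=
  ∀ i, ∀ t : S i, u i (Function.update s i t) ≤ u i s

/-- Weak acyclicity (under better response). -/
def WeaklyAcyclic (u : ∀ i : Fin n, (∀ j, S j) → ℝ) : Prop :=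
  ∀ s, ∃ e, Relation.ReflTransGen (IsBetter u) s e ∧ IsNash u e

/-- Weak acyclicity under best response. -/
def WeaklyAcyclicBest (u : ∀ i : Fin n, (∀ j, S j) → ℝ) : Prop :=
  ∀ s, ∃ e, Relation.ReflTransGen (IsBest u) s e ∧ IsNash u e

/-- Membership of a profile in the subgame given by strategy sets `T`. -/
def InSub (T : ∀ i, Set (S i)) (s : ∀ j, S j) : Prop := ∀ i, s i ∈ T i

/-- Pure Nash equilibrium of the subgame given by `T`. -/
def IsNashOn (u : ∀ i : Fin n, (∀ j, S j) → ℝ) (T : ∀ i, Set (S i)) (s : ∀ j, S j) : Prop :=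
  InSub T s ∧ ∀ i, ∀ t ∈ T i, u i (Function.update s i t) ≤ u i s

/-- Best-response transition within the subgame given by `T`. -/
def IsBestOn (u : ∀ i : Fin n, (∀ j, S j) → ℝ) (T : ∀ i, Set (S i)) (s s' : ∀ j, S j) : Prop :=
  InSub T s ∧ InSub T s' ∧ ∃ i, s' = Function.update s i (s' i) ∧ s' i ≠ s i ∧
    u i s < u i s' ∧ ∀ t ∈ T i, u i (Function.update s i t) ≤ u i s'

/-- Subgame stability: every subgame has a pure Nash equilibrium. -/
def SubgameStable (u : ∀ i : Fin n, (∀ j, S j) → ℝ) : Prop :=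
  ∀ T : ∀ i, Set (S i), (∀ i, (T i).Nonempty) → ∃ s, IsNashOn u T s

/-- Unique subgame stability: every subgame has exactly one pure Nash equilibrium. -/
def USS (u : ∀ i : Fin n, (∀ j, S j) → ℝ) : Prop :=
  ∀ T : ∀ i, Set (S i), (∀ i, (T i).Nonempty) → ∃! s, IsNashOn u T s

/-- Strict game: no player is indifferent between two of its own strategies
against a fixed profile of the others. -/
def StrictGame (u : ∀ i : Fin n, (∀ j, S j) → ℝ) : Prop :=
  ∀ i (s : ∀ j, S j) (t : S i), t ≠ s i → u i (Function.update s i t) ≠ u i s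

/-- Reachability by best-response improvement paths. -/
def BRReach (u : ∀ i : Fin n, (∀ j, S j) → ℝ) (s t : ∀ j, S j) : Prop :=
  Relation.ReflTransGen (IsBest u) s t

/-- The (strategy sets of the) subgame spanned by `BR_Γ(s)`. -/
def SpanBR (u : ∀ i : Fin n, (∀ j, S j) → ℝ) (s : ∀ j, S j) : ∀ i, Set (S i) :=
  fun i => {x | ∃ t, BRReach u s t ∧ t i = x}

/-- A sink of the best-response dynamics: a nonempty set of profiles closed
under best-response transitions and strongly connected. -/
def IsSinkBest (u : ∀ i : Fin n, (∀ j, S j) → ℝ) (X : Set (∀ j, S j)) : Prop :=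
  X.Nonempty ∧ (∀ s ∈ X, ∀ s', IsBest u s s' → s' ∈ X) ∧
    ∀ s ∈ X, ∀ s' ∈ X, Relation.ReflTransGen (IsBest u) s s'

end Defs


section Aux
variable {S : Fin 3 → Type*} [∀ i, Fintype (S i)] [∀ i, DecidableEq (S i)]
variable {u : ∀ i : Fin 3, (∀ j, S j) → ℝ} {sstar : ∀ j, S j}

lemma aux_other {α : Type*} [Fintype α] [DecidableEq α] (hc : Fintype.card α = 2)
    {a b c : α} (h1 : a ≠ b) (h2 : a ≠ c) : b = c := by
  by_contra hbc
  have h3 : ({a, b, c} : Finset α).card = 3 := by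
    rw [Finset.card_insert_of_notMem (by simp [h1, h2]),
      Finset.card_insert_of_notMem (by simp [hbc]), Finset.card_singleton]
  have h4 := Finset.card_le_univ ({a, b, c} : Finset α)
  rw [h3, hc] at h4
  omega

noncomputable def Dd (sstar : ∀ j, S j) (x : ∀ j, S j) : ℕ :=
  (Finset.univ.filter (fun i => x i ≠ sstar i)).card

omit [∀ i, Fintype (S i)] in
lemma Dd_le (x : ∀ j, S j) : Dd sstar x ≤ 3 := by
  have := Finset.card_filter_le (Finset.univ : Finset (Fin 3)) (fun i => x i ≠ sstar i)
  simpa [Dd] using this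

omit [∀ i, Fintype (S i)] in
lemma Dd_eq_three {x : ∀ j, S j} (h : Dd sstar x = 3) : ∀ i, x i ≠ sstar i := by
  intro i
  have huniv : (Finset.univ.filter (fun i => x i ≠ sstar i)) = Finset.univ := by
    apply Finset.eq_univ_of_card
    simpa [Dd] using h
  have hi : i ∈ Finset.univ.filter (fun i => x i ≠ sstar i) := by
    rw [huniv]; exact Finset.mem_univ i
  exact (Finset.mem_filter.mp hi).2

variable (hcard : ∀ i, Fintype.card (S i) = 2)

include hcard in
lemma Dd_step {x y : ∀ j, S j} {i : Fin 3} (hupd : y = Function.update x i (y i))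
    (hne : y i ≠ x i) :
    Dd sstar y = Dd sstar x + 1 ∨ Dd sstar x = Dd sstar y + 1 := by
  have hoff : ∀ j, j ≠ i → y j = x j := by
    intro j hj
    conv_lhs => rw [hupd]
    exact Function.update_of_ne hj _ _
  unfold Dd
  by_cases hc : x i = sstar i
  · left
    have hyi : y i ≠ sstar i := fun h => hne (h.trans hc.symm)
    have heq : (Finset.univ.filter (fun j => y j ≠ sstar j))
        = insert i (Finset.univ.filter (fun j => x j ≠ sstar j)) := by
      ext j
      by_cases hj : j = i
      · subst hj; simp [hyi]
      · simp [Finset.mem_filter, hj, hoff j hj]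
    rw [heq, Finset.card_insert_of_notMem (by simp [hc])]
  · right
    have hyi : y i = sstar i := aux_other (hcard i) (Ne.symm hne) hc
    have heq : (Finset.univ.filter (fun j => x j ≠ sstar j))
        = insert i (Finset.univ.filter (fun j => y j ≠ sstar j)) := by
      ext j
      by_cases hj : j = i
      · subst hj; simp [hc, hyi]
      · simp [Finset.mem_filter, hj, hoff j hj]
    rw [heq, Finset.card_insert_of_notMem (by simp [hyi])]

include hcard in
lemma aux_turn {x y z : ∀ j, S j} (hxy : IsBest u x y) (hyz : IsBest u y z)
    (hx : ∀ i, x i ≠ sstar i) (hz : ∀ i, z i ≠ sstar i) : False := by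
  have hzx : z = x := by
    funext i
    exact aux_other (hcard i) (Ne.symm (hz i)) (Ne.symm (hx i))
  have hyx : IsBest u y x := hzx ▸ hyz
  obtain ⟨i, hupd, hne, hlt, -⟩ := hxy
  obtain ⟨j, hupd', hne', hlt', -⟩ := hyx
  have hij : j = i := by
    by_contra hij
    have hxy2 : x i = y i := by
      conv_lhs => rw [hupd']
      exact Function.update_of_ne (fun h => hij h.symm) _ _
    exact hne hxy2.symm
  subst hij
  linarith

include hcard in
lemma aux_core {a b c d : ∀ j, S j} (h1 : IsBest u a b) (h2 : IsBest u b c)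
    (h3 : IsBest u c d) (ha : 2 ≤ Dd sstar a) (hb : 2 ≤ Dd sstar b)
    (hc : 2 ≤ Dd sstar c) (hd : 2 ≤ Dd sstar d) : False := by
  obtain ⟨i1, hu1, hn1, -⟩ := id h1
  obtain ⟨i2, hu2, hn2, -⟩ := id h2
  obtain ⟨i3, hu3, hn3, -⟩ := id h3
  have s1 := Dd_step hcard (sstar := sstar) hu1 hn1
  have s2 := Dd_step hcard (sstar := sstar) hu2 hn2
  have s3 := Dd_step hcard (sstar := sstar) hu3 hn3
  have la := Dd_le (sstar := sstar) a
  have lb := Dd_le (sstar := sstar) b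
  have lc := Dd_le (sstar := sstar) c
  have ld := Dd_le (sstar := sstar) d
  have hcase : (Dd sstar a = 3 ∧ Dd sstar c = 3) ∨ (Dd sstar b = 3 ∧ Dd sstar d = 3) := by
    omega
  rcases hcase with ⟨h3a, h3c⟩ | ⟨h3b, h3d⟩
  · exact aux_turn hcard h1 h2 (Dd_eq_three h3a) (Dd_eq_three h3c)
  · exact aux_turn hcard h2 h3 (Dd_eq_three h3b) (Dd_eq_three h3d)

/-- Extract three consecutive edges from a cycle. -/
lemma aux_extract {α : Type*} {r : α → α → Prop} {s : α} (h : Relation.TransGen r s s) :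
    ∃ b c d, r s b ∧ r b c ∧ r c d := by
  obtain ⟨b, hsb, hbs⟩ := Relation.TransGen.head'_iff.mp h
  have hbb : Relation.TransGen r b b := Relation.TransGen.tail' hbs hsb
  obtain ⟨c, hbc, hcb⟩ := Relation.TransGen.head'_iff.mp hbb
  have hcc : Relation.TransGen r c c := Relation.TransGen.tail' hcb hbc
  obtain ⟨d, hcd, -⟩ := Relation.TransGen.head'_iff.mp hcc
  exact ⟨b, c, d, hsb, hbc, hcd⟩

end Aux

theorem stmt10 {S : Fin 3 → Type*} [∀ i, Fintype (S i)] [∀ i, DecidableEq (S i)]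
    (u : ∀ i : Fin 3, (∀ j, S j) → ℝ) (hcard : ∀ i, Fintype.card (S i) = 2)
    (hstrict : StrictGame u) (sstar : ∀ j, S j) (hstar : IsNash u sstar) :
    (¬ ∃ s, Relation.TransGen
        (fun a b => IsBest u a b ∧
          2 ≤ (Finset.univ.filter (fun i => a i ≠ sstar i)).card ∧
          2 ≤ (Finset.univ.filter (fun i => b i ≠ sstar i)).card) s s) ∧
    (∀ X : Set (∀ j, S j), IsSinkBest u X → ¬ ∃ a ∈ X, ∃ b ∈ X, a ≠ b) := by
  constructor
  · rintro ⟨s, hcyc⟩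
    obtain ⟨b, c, d, ⟨h1, ha2, hb2⟩, ⟨h2, -, hc2⟩, ⟨h3, -, hd2⟩⟩ := aux_extract hcyc
    exact aux_core hcard h1 h2 h3 ha2 hb2 hc2 hd2
  · rintro X ⟨-, hclosed, hconn⟩ ⟨a, ha, b, hb, hab⟩
    -- s* is not in X
    have hsX : sstar ∉ X := by
      intro hs
      obtain ⟨e, he, hne⟩ : ∃ e, e ∈ X ∧ e ≠ sstar := by
        by_cases h : a = sstar
        · exact ⟨b, hb, fun hh => hab (h.trans hh.symm)⟩
        · exact ⟨a, ha, h⟩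
      rcases Relation.ReflTransGen.cases_head (hconn sstar hs e he) with heq | ⟨y, hy, -⟩
      · exact hne heq.symm
      · obtain ⟨i, hupd, hne', hlt, -⟩ := hy
        have := hstar i (y i)
        rw [← hupd] at this
        linarith
    -- every element of X is at distance ≥ 2 from s*
    have hdist : ∀ p ∈ X, 2 ≤ Dd sstar p := by
      intro p hp
      by_contra hlt
      push_neg at hlt
      interval_cases hD : Dd sstar p
      · have hemp : (Finset.univ.filter (fun i => p i ≠ sstar i)) = ∅ :=
          Finset.card_eq_zero.mp hD
        have : p = sstar := by
          funext i
          by_contra hne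
          have : i ∈ Finset.univ.filter (fun i => p i ≠ sstar i) := by
            simp [hne]
          simp [hemp] at this
        exact hsX (this ▸ hp)
      · obtain ⟨i, hi⟩ := Finset.card_eq_one.mp hD
        have hpi : p i ≠ sstar i := by
          have : i ∈ Finset.univ.filter (fun j => p j ≠ sstar j) := by
            rw [hi]; exact Finset.mem_singleton_self i
          exact (Finset.mem_filter.mp this).2
        have hoff : ∀ j, j ≠ i → p j = sstar j := by
          intro j hj
          by_contra hne
          have : j ∈ Finset.univ.filter (fun j => p j ≠ sstar j) := by simp [hne]
          rw [hi, Finset.mem_singleton] at this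
          exact hj this
        have hpu : p = Function.update sstar i (p i) := by
          funext j
          by_cases hj : j = i
          · subst hj; simp
          · simp [Function.update_of_ne hj, hoff j hj]
        have hbest : IsBest u p sstar := by
          refine ⟨i, ?_, ?_, ?_, ?_⟩
          · funext j
            by_cases hj : j = i
            · subst hj; simp
            · simp [Function.update_of_ne hj, hoff j hj]
          · exact Ne.symm hpi
          · have hle := hstar i (p i)
            have hne := hstrict i sstar (p i) hpi
            rw [← hpu] at hle hne
            exact lt_of_le_of_ne hle hne
          · intro t
            have hupd2 : Function.update p i t = Function.update sstar i t := by
              funext j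
              by_cases hj : j = i
              · subst hj; simp
              · simp [Function.update_of_ne hj, hoff j hj]
            rw [hupd2]
            exact hstar i t
        exact hsX (hclosed p hp sstar hbest)
    -- build a best-response cycle inside X
    have htab : Relation.TransGen (IsBest u) a b := by
      rcases Relation.reflTransGen_iff_eq_or_transGen.mp (hconn a ha b hb) with heq | ht
      · exact absurd heq.symm hab
      · exact ht
    have hcyc : Relation.TransGen (IsBest u) a a :=
      Relation.TransGen.trans_left htab (hconn b hb a ha)
    obtain ⟨x, y, z, h1, h2, h3⟩ := aux_extract hcyc
    have hxX : x ∈ X := hclosed a ha x h1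
    have hyX : y ∈ X := hclosed x hxX y h2
    have hzX : z ∈ X := hclosed y hyX z h3
    exact aux_core hcard h1 h2 h3 (hdist a ha) (hdist x hxX) (hdist y hyX) (hdist z hzX)
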